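/- Let m ≥ 2 be an integer, let α ∈ [1,2], and set β_m = 2α(m−1)/(αm − 2 + α), so that q = (α, β_m, ..., β_m) satisfies 1/α + (m−1)/β_m = (m+1)/2. Let C ≥ 0 be a constant such that for every positive integer N and every continuous m-linear form T : (ℝ^N)^m → ℝ (ℝ^N with the sup norm), ( Σ_{j₁=1}^{N} ( Σ_{j₂,...,j_m=1}^{N} |T(e_{j₁},...,e_{j_m})|^{β_m} )^{α/β_m} )^{1/α} ≤ C · ‖T‖. Then C ≥ 2^{(2m − αm − 4 + 3α)/(2α)}. -/

import Mathlib

open Real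

open Finset


noncomputable section BHAux

/-- sign attached to an element of `Fin 2`. -/
def bhSgn (t : Fin 2) : ℝ := if t = 0 then 1 else -1

lemma abs_bhSgn (t : Fin 2) : |bhSgn t| = 1 := by
  unfold bhSgn; split <;> norm_num

def bhIdx0 (m : ℕ) : Fin (2 ^ (m + 1)) := ⟨0, by positivity⟩

def bhIdx1 (m : ℕ) : Fin (2 ^ (m + 1)) := ⟨1, Nat.one_lt_two_pow (by omega)⟩

lemma bhIdx_ne (m : ℕ) : bhIdx0 m ≠ bhIdx1 m := by
  simp [bhIdx0, bhIdx1, Fin.ext_iff]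

/-- The extremal multilinear form. -/
def bhMap (m : ℕ) : MultilinearMap ℝ (fun _ : Fin (m + 2) => (Fin (2 ^ (m + 1)) → ℝ)) ℝ :=
  ∑ j : Fin (2 ^ (m + 1)),
    (MultilinearMap.mkPiAlgebra ℝ (Fin (m + 2)) ℝ).compLinearMap
      (Fin.cons (LinearMap.proj j)
        (fun k => LinearMap.proj (bhIdx0 m) +
          bhSgn (finFunctionFinEquiv.symm j k) • LinearMap.proj (bhIdx1 m)))

lemma bhMap_apply (m : ℕ) (x : ∀ _ : Fin (m + 2), Fin (2 ^ (m + 1)) → ℝ) :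
    bhMap m x = ∑ j : Fin (2 ^ (m + 1)), x 0 j *
      ∏ k : Fin (m + 1), (x k.succ (bhIdx0 m) +
        bhSgn (finFunctionFinEquiv.symm j k) * x k.succ (bhIdx1 m)) := by
  simp [bhMap, Fin.prod_univ_succ]

end BHAux

section NB
lemma abs_add_abs_sub_le {a b c : ℝ} (ha : |a| ≤ c) (hb : |b| ≤ c) :
    |a + b| + |a - b| ≤ 2 * c := by
  obtain ⟨ha1, ha2⟩ := abs_le.mp ha
  obtain ⟨hb1, hb2⟩ := abs_le.mp hb
  rcases abs_cases (a + b) with ⟨e1, _⟩ | ⟨e1, _⟩ <;>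
    rcases abs_cases (a - b) with ⟨e2, _⟩ | ⟨e2, _⟩ <;> rw [e1, e2] <;> linarith

lemma bhMap_norm_le (m : ℕ) (x : ∀ _ : Fin (m + 2), Fin (2 ^ (m + 1)) → ℝ) :
    ‖bhMap m x‖ ≤ 2 ^ (m + 1) * ∏ i, ‖x i‖ := by
  rw [bhMap_apply, Real.norm_eq_abs]
  calc |∑ j : Fin (2 ^ (m + 1)), x 0 j *
      ∏ k : Fin (m + 1), (x k.succ (bhIdx0 m) +
        bhSgn (finFunctionFinEquiv.symm j k) * x k.succ (bhIdx1 m))|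
      ≤ ∑ j : Fin (2 ^ (m + 1)), |x 0 j| *
        ∏ k : Fin (m + 1), |x k.succ (bhIdx0 m) +
          bhSgn (finFunctionFinEquiv.symm j k) * x k.succ (bhIdx1 m)| := by
        refine (Finset.abs_sum_le_sum_abs _ _).trans_eq ?_
        refine Finset.sum_congr rfl fun j _ => ?_
        rw [abs_mul, Finset.abs_prod]
    _ ≤ ∑ j : Fin (2 ^ (m + 1)), ‖x 0‖ *
        ∏ k : Fin (m + 1), |x k.succ (bhIdx0 m) +
          bhSgn (finFunctionFinEquiv.symm j k) * x k.succ (bhIdx1 m)| := by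
        refine Finset.sum_le_sum fun j _ => ?_
        exact mul_le_mul_of_nonneg_right (norm_le_pi_norm (x 0) j) (by positivity)
    _ = ‖x 0‖ * ∑ σ : Fin (m + 1) → Fin 2,
        ∏ k : Fin (m + 1), |x k.succ (bhIdx0 m) + bhSgn (σ k) * x k.succ (bhIdx1 m)| := by
        rw [← Finset.mul_sum]
        congr 1
        exact (Equiv.sum_comp finFunctionFinEquiv.symm
          (fun σ => ∏ k : Fin (m + 1),
            |x k.succ (bhIdx0 m) + bhSgn (σ k) * x k.succ (bhIdx1 m)|)).symm ▸ rfl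
    _ = ‖x 0‖ * ∏ k : Fin (m + 1),
        ∑ t : Fin 2, |x k.succ (bhIdx0 m) + bhSgn t * x k.succ (bhIdx1 m)| := by
        rw [Fintype.prod_sum]
    _ ≤ ‖x 0‖ * ∏ k : Fin (m + 1), 2 * ‖x k.succ‖ := by
        refine mul_le_mul_of_nonneg_left (Finset.prod_le_prod (fun k _ => by positivity)
          (fun k _ => ?_)) (norm_nonneg _)
        rw [Fin.sum_univ_two]
        show |_ + bhSgn 0 * _| + |_ + bhSgn 1 * _| ≤ _
        simp only [bhSgn]
        norm_num
        exact abs_add_abs_sub_le (norm_le_pi_norm (x k.succ) (bhIdx0 m))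
          (norm_le_pi_norm (x k.succ) (bhIdx1 m))
    _ = 2 ^ (m + 1) * ∏ i, ‖x i‖ := by
        rw [Finset.prod_mul_distrib, Finset.prod_const, Finset.card_univ, Fintype.card_fin,
          Fin.prod_univ_succ (f := fun i => ‖x i‖)]
        ring
end NB

lemma bhMap_basis (m : ℕ) (j₁ : Fin (2 ^ (m + 1))) (j : Fin (m + 1) → Fin (2 ^ (m + 1))) :
    |bhMap m (Fin.cons (Pi.single j₁ 1) (fun i => Pi.single (j i) 1))| =
      ∏ k : Fin (m + 1),
        (if j k = bhIdx0 m ∨ j k = bhIdx1 m then (1 : ℝ) else 0) := by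
  rw [bhMap_apply]
  simp only [Fin.cons_zero, Fin.cons_succ]
  rw [Finset.sum_eq_single j₁ (fun b _ hb => by simp [Pi.single_apply, hb])
    (fun hb => absurd (Finset.mem_univ j₁) hb)]
  rw [Pi.single_eq_same, one_mul, Finset.abs_prod]
  refine Finset.prod_congr rfl fun k _ => ?_
  rcases eq_or_ne (j k) (bhIdx0 m) with h0 | h0
  · simp [h0, Pi.single_apply, (bhIdx_ne m).symm, Ne.symm (bhIdx_ne m)]
  · rcases eq_or_ne (j k) (bhIdx1 m) with h1 | h1
    · simp [h1, Pi.single_apply, Ne.symm (bhIdx_ne m), bhIdx_ne m, h0, abs_bhSgn]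
    · simp [Pi.single_apply, Ne.symm h0, Ne.symm h1, h0, h1]

lemma bhMap_inner_sum (m : ℕ) (β : ℝ) (hβ : 0 < β) (j₁ : Fin (2 ^ (m + 1))) :
    ∑ j : Fin (m + 1) → Fin (2 ^ (m + 1)),
      |bhMap m (Fin.cons (Pi.single j₁ 1) (fun i => Pi.single (j i) 1))| ^ β
      = 2 ^ (m + 1) := by
  have key : ∀ j : Fin (m + 1) → Fin (2 ^ (m + 1)),
      |bhMap m (Fin.cons (Pi.single j₁ 1) (fun i => Pi.single (j i) 1))| ^ β
        = ∏ k : Fin (m + 1),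
          (if j k = bhIdx0 m ∨ j k = bhIdx1 m then (1 : ℝ) else 0) := by
    intro j
    rw [bhMap_basis]
    by_cases hall : ∀ k : Fin (m + 1), j k = bhIdx0 m ∨ j k = bhIdx1 m
    · rw [Finset.prod_eq_one (fun k _ => by simp [hall k])]
      exact Real.one_rpow β
    · push_neg at hall
      obtain ⟨k, hk⟩ := hall
      rw [Finset.prod_eq_zero (Finset.mem_univ k) (by simp [hk])]
      exact Real.zero_rpow hβ.ne'
  calc ∑ j : Fin (m + 1) → Fin (2 ^ (m + 1)),
      |bhMap m (Fin.cons (Pi.single j₁ 1) (fun i => Pi.single (j i) 1))| ^ β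
      = ∑ j : Fin (m + 1) → Fin (2 ^ (m + 1)), ∏ k : Fin (m + 1),
          (if j k = bhIdx0 m ∨ j k = bhIdx1 m then (1 : ℝ) else 0) :=
        Finset.sum_congr rfl fun j _ => key j
    _ = ∏ k : Fin (m + 1), ∑ t : Fin (2 ^ (m + 1)),
          (if t = bhIdx0 m ∨ t = bhIdx1 m then (1 : ℝ) else 0) :=
        by
          rw [Fintype.prod_sum (fun (k : Fin (m + 1)) (t : Fin (2 ^ (m + 1))) =>
            (if t = bhIdx0 m ∨ t = bhIdx1 m then (1 : ℝ) else 0))]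
    _ = 2 ^ (m + 1) := by
        have : ∑ t : Fin (2 ^ (m + 1)),
            (if t = bhIdx0 m ∨ t = bhIdx1 m then (1 : ℝ) else 0) = 2 := by
          have : ∀ t : Fin (2 ^ (m + 1)),
              (if t = bhIdx0 m ∨ t = bhIdx1 m then (1 : ℝ) else 0)
                = (if t = bhIdx0 m then (1 : ℝ) else 0)
                  + (if t = bhIdx1 m then (1 : ℝ) else 0) := by
            intro t
            rcases eq_or_ne t (bhIdx0 m) with h0 | h0
            · simp [h0, bhIdx_ne m]
            · rcases eq_or_ne t (bhIdx1 m) with h1 | h1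
              · simp [h1, h0, Ne.symm (bhIdx_ne m)]
              · simp [h0, h1]
          rw [Finset.sum_congr rfl fun t _ => this t, Finset.sum_add_distrib]
          simp
          norm_num
        rw [Finset.prod_congr rfl fun k _ => this, Finset.prod_const, Finset.card_univ,
          Fintype.card_fin]




/-- **Lower bound for the constants of the generalized Bohnenblust–Hille inequality
with multiple exponent `(α, β_m, ..., β_m)`.** Let `m ≥ 2` (written as `m + 2`),
`α ∈ [1,2]`, and `β = 2α(m−1)/(αm − 2 + α)`. If `C ≥ 0` is such that for every positive
integer `N` and every continuous `m`-linear form `T` on `(ℝ^N)^m` (sup norm),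
`(∑_{j₁} (∑_{j₂,...,j_m} |T(e_{j₁},...,e_{j_m})|^β)^{α/β})^{1/α} ≤ C‖T‖`, then
`C ≥ 2^{(2m − αm − 4 + 3α)/(2α)}`. -/
theorem generalized_BH_lower_bound (m : ℕ) (α β : ℝ)
    (hα1 : 1 ≤ α) (hα2 : α ≤ 2)
    (hβ : β = 2 * α * ((m : ℝ) + 2 - 1) / (α * ((m : ℝ) + 2) - 2 + α))
    (C : ℝ) (hC : 0 ≤ C)
    (h : ∀ N : ℕ, 0 < N →
      ∀ T : ContinuousMultilinearMap ℝ (fun _ : Fin (m + 2) => (Fin N → ℝ)) ℝ,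
        (∑ j₁ : Fin N, (∑ j : Fin (m + 1) → Fin N,
            |T (Fin.cons (Pi.single j₁ 1) (fun i => Pi.single (j i) 1))| ^ β)
          ^ (α / β)) ^ (1 / α) ≤ C * ‖T‖) :
    (2 : ℝ) ^ ((2 * ((m : ℝ) + 2) - α * ((m : ℝ) + 2) - 4 + 3 * α) / (2 * α)) ≤ C := by
  have hα0 : (0 : ℝ) < α := lt_of_lt_of_le one_pos hα1
  have hm0 : (0 : ℝ) ≤ (m : ℝ) := Nat.cast_nonneg m
  have hden : (0 : ℝ) < α * ((m : ℝ) + 2) - 2 + α := by nlinarith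
  have hβpos : (0 : ℝ) < β := by
    rw [hβ]; apply div_pos; · nlinarith
    · exact hden
  have h2 : (0 : ℝ) < 2 := two_pos
  set a : ℝ := (m : ℝ) + 1 with ha
  -- the extremal form
  set T : ContinuousMultilinearMap ℝ (fun _ : Fin (m + 2) => (Fin (2 ^ (m + 1)) → ℝ)) ℝ :=
    (bhMap m).mkContinuous (2 ^ (m + 1)) (bhMap_norm_le m) with hT
  have hTb : ∀ x, T x = bhMap m x := fun x => rfl
  have key := h (2 ^ (m + 1)) (by positivity) T
  -- compute the left-hand side
  have e2 : ((2 : ℝ) ^ (m + 1)) = (2 : ℝ) ^ (a : ℝ) := by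
    rw [← Real.rpow_natCast 2 (m + 1)]; push_cast; ring_nf; rw [ha, add_comm]
  have hLHS : (∑ j₁ : Fin (2 ^ (m + 1)), (∑ j : Fin (m + 1) → Fin (2 ^ (m + 1)),
      |T (Fin.cons (Pi.single j₁ 1) (fun i => Pi.single (j i) 1))| ^ β)
        ^ (α / β)) ^ (1 / α) = (2 : ℝ) ^ (a / α + a / β) := by
    have inner : ∀ j₁ : Fin (2 ^ (m + 1)), (∑ j : Fin (m + 1) → Fin (2 ^ (m + 1)),
        |T (Fin.cons (Pi.single j₁ 1) (fun i => Pi.single (j i) 1))| ^ β)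
          = (2 : ℝ) ^ (m + 1) := by
      intro j₁
      simp only [hTb]
      exact bhMap_inner_sum m β hβpos j₁
    rw [Finset.sum_congr rfl fun j₁ _ => by rw [inner j₁]]
    rw [Finset.sum_const, Finset.card_univ, Fintype.card_fin, nsmul_eq_mul]
    push_cast
    rw [e2, ← Real.rpow_mul h2.le, ← Real.rpow_add h2, ← Real.rpow_mul h2.le]
    rw [show (a + a * (α / β)) * (1 / α) = a / α + a / β from by
      field_simp [hα0.ne', hβpos.ne']]
  rw [hLHS] at key
  have hnorm : ‖T‖ ≤ (2 : ℝ) ^ (m + 1) :=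
    MultilinearMap.mkContinuous_norm_le _ (by positivity) _
  have key2 : (2 : ℝ) ^ (a / α + a / β) ≤ C * (2 : ℝ) ^ (a : ℝ) := by
    rw [← e2]
    calc (2 : ℝ) ^ (a / α + a / β) ≤ C * ‖T‖ := key
      _ ≤ C * (2 : ℝ) ^ (m + 1) := by
          exact mul_le_mul_of_nonneg_left hnorm hC
  have hfin : (2 : ℝ) ^ (a / α + a / β - a) ≤ C := by
    rw [Real.rpow_sub h2]
    exact (div_le_iff₀ (Real.rpow_pos_of_pos h2 a)).mpr key2
  have hexp : (2 * ((m : ℝ) + 2) - α * ((m : ℝ) + 2) - 4 + 3 * α) / (2 * α)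
      = a / α + a / β - a := by
    rw [hβ, ha]
    have h1 : (2 : ℝ) * α * ((m : ℝ) + 2 - 1) ≠ 0 := ne_of_gt (by nlinarith)
    have h3 : (m : ℝ) + 1 ≠ 0 := by positivity
    rw [show (m : ℝ) + 2 - 1 = m + 1 by ring]
    field_simp
    ring
  rw [hexp]
  exact hfin
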